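/- arXiv:1601.06420 — 3 statements merged into one kernel-verified Lean document; each statement's English description precedes it below -/
import Mathlib

section
/- The function F(k)^2 = (1/k)(1 - e^{-4k} - 4k e^{-2k}) / (1 - e^{-2k})^2 is strictly decreasing on (0, ∞). -/
open Real

noncomputable def cvL (a b c d e f g h : ℝ) : ℝ → ℝ := fun y =>
  a * Real.sinh y + b * Real.cosh y + c * Real.sinh (3 * y) + d * Real.cosh (3 * y)
    + e * (y * Real.sinh y) + f * (y * Real.cosh y)
    + g * (y ^ 2 * Real.sinh y) + h * (y ^ 2 * Real.cosh y)

lemma cvL_hasDerivAt (a b c d e f g h x : ℝ) :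
    HasDerivAt (cvL a b c d e f g h)
      (cvL (b + e) (a + f) (3 * d) (3 * c) (f + 2 * g) (e + 2 * h) h g x) x := by
  have hs : HasDerivAt Real.sinh (Real.cosh x) x := Real.hasDerivAt_sinh x
  have hc : HasDerivAt Real.cosh (Real.sinh x) x := Real.hasDerivAt_cosh x
  have h3 : HasDerivAt (fun y : ℝ => 3 * y) 3 x := by
    simpa using (hasDerivAt_id x).const_mul (3 : ℝ)
  have hs3 : HasDerivAt (fun y : ℝ => Real.sinh (3 * y)) (Real.cosh (3 * x) * 3) x :=
    (Real.hasDerivAt_sinh (3 * x)).comp x h3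
  have hc3 : HasDerivAt (fun y : ℝ => Real.cosh (3 * y)) (Real.sinh (3 * x) * 3) x :=
    (Real.hasDerivAt_cosh (3 * x)).comp x h3
  have hid : HasDerivAt (fun y : ℝ => y) 1 x := hasDerivAt_id x
  have hsq : HasDerivAt (fun y : ℝ => y ^ 2) (2 * x) x := by
    simpa using hasDerivAt_pow 2 x
  have H := ((((((((hs.const_mul a).add (hc.const_mul b)).add
      (hs3.const_mul c)).add (hc3.const_mul d)).add
      ((hid.mul hs).const_mul e)).add ((hid.mul hc).const_mul f)).add
      ((hsq.mul hs).const_mul g)).add ((hsq.mul hc).const_mul h))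
  refine H.congr_deriv ?_
  unfold cvL
  ring

lemma cvL_zero (a b c d e f g h : ℝ) : cvL a b c d e f g h 0 = b + d := by
  simp [cvL]

lemma pos_of_hasDerivAt (f f' : ℝ → ℝ) (h0 : f 0 = 0)
    (hd : ∀ x, HasDerivAt f (f' x) x)
    (hp : ∀ x, 0 < x → 0 < f' x) : ∀ x, 0 < x → 0 < f x := by
  intro x hx
  have hm : StrictMonoOn f (Set.Ici 0) := by
    apply strictMonoOn_of_deriv_pos (convex_Ici 0)
    · exact fun y _ => (hd y).continuousAt.continuousWithinAt
    · intro y hy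
      rw [interior_Ici] at hy
      rw [(hd y).deriv]
      exact hp y hy
  have := hm Set.self_mem_Ici (Set.mem_Ici.2 hx.le) hx
  simpa [h0] using this

lemma sinh_le_mul_cosh : ∀ x : ℝ, 0 < x → Real.sinh x ≤ x * Real.cosh x := by
  intro x hx
  have key : ∀ y : ℝ, 0 < y → 0 < y * Real.cosh y - Real.sinh y := by
    apply pos_of_hasDerivAt (f' := fun y => y * Real.sinh y)
    · simp
    · intro y
      have := ((hasDerivAt_id y).mul (Real.hasDerivAt_cosh y)).sub (Real.hasDerivAt_sinh y)
      refine this.congr_deriv ?_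
      simp [id]
    · intro y hy
      exact mul_pos hy (Real.sinh_pos_iff.2 hy)
  linarith [key x hx]

lemma h6_pos : ∀ x : ℝ, 0 < x → 0 < cvL 0 (-217) 0 729 (-92) 0 0 (-8) x := by
  intro x hx
  have h1 : Real.cosh x * Real.cosh (2 * x) ≤ Real.cosh (3 * x) := by
    have h3x : Real.cosh (3 * x) = Real.cosh (2 * x + x) := by ring_nf
    rw [h3x, Real.cosh_add]
    have := mul_nonneg (Real.sinh_nonneg_iff.2 (by linarith : (0:ℝ) ≤ 2 * x)) (Real.sinh_nonneg_iff.2 hx.le)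
    nlinarith [this]
  have h2 : 1 + 2 * x ^ 2 ≤ Real.cosh (2 * x) := by
    have hx' : x ≤ Real.sinh x := (Real.self_le_sinh_iff.2 hx.le)
    rw [Real.cosh_two_mul x, Real.cosh_sq]
    nlinarith [hx'.trans_eq rfl, Real.sinh_pos_iff.2 hx]
  have h3 : Real.sinh x ≤ x * Real.cosh x := sinh_le_mul_cosh x hx
  have h4 : 1 ≤ Real.cosh x := Real.one_le_cosh x
  have h5 : 0 < Real.cosh x := Real.cosh_pos x
  unfold cvL
  nlinarith [mul_le_mul_of_nonneg_left h2 h5.le, mul_pos (mul_pos hx hx) h5,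
    mul_le_mul_of_nonneg_left h3 hx.le]

lemma h0_pos : ∀ x : ℝ, 0 < x → 0 < cvL 0 (-1) 0 1 4 0 0 (-8) x := by
  have step : ∀ a b c d e f g h : ℝ, b + d = 0 →
      (∀ x, 0 < x → 0 < cvL (b + e) (a + f) (3 * d) (3 * c) (f + 2 * g) (e + 2 * h) h g x) →
      ∀ x, 0 < x → 0 < cvL a b c d e f g h x := by
    intro a b c d e f g h hz hp
    exact pos_of_hasDerivAt _ _ (by rw [cvL_zero]; exact hz)
      (fun x => cvL_hasDerivAt a b c d e f g h x) hp
  have p6 := h6_pos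
  have p5 : ∀ x, 0 < x → 0 < cvL (-141) 0 243 0 0 (-76) (-8) 0 x := by
    refine step _ _ _ _ _ _ _ _ (by norm_num) ?_
    intro x hx
    have := p6 x hx
    convert this using 2 <;> norm_num
  have p4 : ∀ x, 0 < x → 0 < cvL 0 (-81) 0 81 (-60) 0 0 (-8) x := by
    refine step _ _ _ _ _ _ _ _ (by norm_num) ?_
    intro x hx
    have := p5 x hx
    convert this using 2 <;> norm_num
  have p3 : ∀ x, 0 < x → 0 < cvL (-37) 0 27 0 0 (-44) (-8) 0 x := by
    refine step _ _ _ _ _ _ _ _ (by norm_num) ?_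
    intro x hx
    have := p4 x hx
    convert this using 2 <;> norm_num
  have p2 : ∀ x, 0 < x → 0 < cvL 0 (-9) 0 9 (-28) 0 0 (-8) x := by
    refine step _ _ _ _ _ _ _ _ (by norm_num) ?_
    intro x hx
    have := p3 x hx
    convert this using 2 <;> norm_num
  have p1 : ∀ x, 0 < x → 0 < cvL 3 0 3 0 0 (-12) (-8) 0 x := by
    refine step _ _ _ _ _ _ _ _ (by norm_num) ?_
    intro x hx
    have := p2 x hx
    convert this using 2 <;> norm_num
  refine step _ _ _ _ _ _ _ _ (by norm_num) ?_
  intro x hx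
  have := p1 x hx
  convert this using 2 <;> norm_num

noncomputable def cvG : ℝ → ℝ := fun k =>
  (Real.sinh k * Real.cosh k - k) / (k * Real.sinh k ^ 2)

lemma cvG_hasDerivAt (x : ℝ) (hx : 0 < x) :
    HasDerivAt cvG
      (((Real.cosh x * Real.cosh x + Real.sinh x * Real.sinh x - 1) * (x * Real.sinh x ^ 2)
          - (Real.sinh x * Real.cosh x - x)
            * (1 * Real.sinh x ^ 2 + x * (2 * Real.sinh x ^ 1 * Real.cosh x)))
        / (x * Real.sinh x ^ 2) ^ 2) x := by
  have hs : HasDerivAt Real.sinh (Real.cosh x) x := Real.hasDerivAt_sinh x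
  have hc : HasDerivAt Real.cosh (Real.sinh x) x := Real.hasDerivAt_cosh x
  have hnum : HasDerivAt (fun y => Real.sinh y * Real.cosh y - y)
      (Real.cosh x * Real.cosh x + Real.sinh x * Real.sinh x - 1) x :=
    (hs.mul hc).sub (hasDerivAt_id x)
  have hsq : HasDerivAt (fun y => Real.sinh y ^ 2) (2 * Real.sinh x ^ 1 * Real.cosh x) x :=
    hs.pow 2
  have hden : HasDerivAt (fun y => y * Real.sinh y ^ 2)
      (1 * Real.sinh x ^ 2 + x * (2 * Real.sinh x ^ 1 * Real.cosh x)) x :=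
    (hasDerivAt_id x).mul hsq
  have hden0 : x * Real.sinh x ^ 2 ≠ 0 :=
    (mul_pos hx (pow_pos (Real.sinh_pos_iff.2 hx) 2)).ne'
  exact hnum.div hden hden0

lemma cvG_deriv_neg (x : ℝ) (hx : 0 < x) :
    ((Real.cosh x * Real.cosh x + Real.sinh x * Real.sinh x - 1) * (x * Real.sinh x ^ 2)
        - (Real.sinh x * Real.cosh x - x)
          * (1 * Real.sinh x ^ 2 + x * (2 * Real.sinh x ^ 1 * Real.cosh x)))
      / (x * Real.sinh x ^ 2) ^ 2 < 0 := by
  apply div_neg_of_neg_of_pos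
  · have h0 := h0_pos x hx
    have hs := Real.sinh_pos_iff.2 hx
    have h3 : Real.cosh (3 * x) = 4 * Real.cosh x ^ 3 - 3 * Real.cosh x :=
      Real.cosh_three_mul x
    unfold cvL at h0
    rw [h3] at h0
    have H0 : 0 < 4 * Real.cosh x ^ 3 - 4 * Real.cosh x + 4 * x * Real.sinh x
        - 8 * x ^ 2 * Real.cosh x := by linarith
    have hnum : (Real.cosh x * Real.cosh x + Real.sinh x * Real.sinh x - 1)
          * (x * Real.sinh x ^ 2)
        - (Real.sinh x * Real.cosh x - x)
          * (1 * Real.sinh x ^ 2 + x * (2 * Real.sinh x ^ 1 * Real.cosh x))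
        = -(Real.sinh x * (4 * Real.cosh x ^ 3 - 4 * Real.cosh x + 4 * x * Real.sinh x
            - 8 * x ^ 2 * Real.cosh x)) / 4 := by
      linear_combination (x * Real.sinh x ^ 2 - Real.sinh x * Real.cosh x) * Real.sinh_sq x
    rw [hnum]
    have := mul_pos hs H0
    linarith
  · positivity

lemma cvG_strictAnti : StrictAntiOn cvG (Set.Ioi 0) := by
  apply strictAntiOn_of_deriv_neg (convex_Ioi 0)
  · intro y hy
    exact (cvG_hasDerivAt y hy).continuousAt.continuousWithinAt
  · intro y hy
    rw [interior_Ioi] at hy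
    rw [(cvG_hasDerivAt y hy).deriv]
    exact cvG_deriv_neg y hy

lemma cv_eq (k : ℝ) (hk : 0 < k) :
    (1 / k) * (1 - Real.exp (-4 * k) - 4 * k * Real.exp (-2 * k)) /
      (1 - Real.exp (-2 * k)) ^ 2 = cvG k := by
  have hv : Real.exp (-k) < 1 := Real.exp_lt_one_iff.2 (by linarith)
  have hv0 : 0 < Real.exp (-k) := Real.exp_pos _
  have e2 : Real.exp (-2 * k) = Real.exp (-k) ^ 2 := by
    rw [← Real.exp_nat_mul]; norm_num
  have e4 : Real.exp (-4 * k) = Real.exp (-k) ^ 4 := by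
    rw [← Real.exp_nat_mul]; norm_num
  have ek : Real.exp k = (Real.exp (-k))⁻¹ := by
    rw [← Real.exp_neg]; norm_num
  have hs : Real.sinh k = (Real.exp k - Real.exp (-k)) / 2 := Real.sinh_eq k
  have hc : Real.cosh k = (Real.exp k + Real.exp (-k)) / 2 := Real.cosh_eq k
  have hsne : Real.sinh k ≠ 0 := (Real.sinh_pos_iff.2 hk).ne'
  have hd : (1 : ℝ) - Real.exp (-k) ^ 2 ≠ 0 := by nlinarith
  have hs' : Real.sinh k = (1 - Real.exp (-k) ^ 2) / (2 * Real.exp (-k)) := by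
    rw [hs, ek]; field_simp
  have hc' : Real.cosh k = (1 + Real.exp (-k) ^ 2) / (2 * Real.exp (-k)) := by
    rw [hc, ek]; field_simp
  unfold cvG
  rw [hs', hc', e2, e4]
  field_simp [hk.ne', hv0.ne']
  ring

theorem cv_sq_strictAnti :
    StrictAntiOn (fun k : ℝ =>
        (1 / k) * (1 - Real.exp (-4 * k) - 4 * k * Real.exp (-2 * k)) /
          (1 - Real.exp (-2 * k)) ^ 2)
      (Set.Ioi 0) := by
  intro a ha b hb hab
  have ha' : (0:ℝ) < a := ha
  have hb' : (0:ℝ) < b := hb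
  simp only
  rw [cv_eq a ha', cv_eq b hb']
  exact cvG_strictAnti ha hb hab
end

section
/- The limit as (k_z, k_x) → (0,0) along k_x = βk_z, β ∈ (−1,1) fixed, of the expression [4k_z² csch²(2k_z) + 2k_z coth(2k_z) − (k_x+k_z)² csch²(k_x+k_z) − (k_x+k_z) coth(k_x+k_z)]^{1/2} / [2k_z coth(2k_z) − (k_x+k_z) coth(k_x+k_z)] equals √(2(β² + 2β + 5)/(5(3 − 2β − β²))). -/
open Filter

/-- Hyperbolic cotangent. -/
noncomputable def coth (x : ℝ) : ℝ := Real.cosh x / Real.sinh x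

/-- Hyperbolic cosecant. -/
noncomputable def csch (x : ℝ) : ℝ := 1 / Real.sinh x


lemma tendsto_right_of_continuousAt {f : ℝ → ℝ} (h : ContinuousAt f 0) :
    Tendsto f (nhdsWithin 0 (Set.Ioi 0)) (nhds (f 0)) :=
  h.tendsto.mono_left nhdsWithin_le_nhds

lemma LA : Tendsto (fun x : ℝ => Real.sinh x / x) (nhdsWithin 0 (Set.Ioi 0)) (nhds 1) := by
  have h : HasDerivAt Real.sinh 1 0 := by simpa using Real.hasDerivAt_sinh 0
  have h2 := hasDerivAt_iff_tendsto_slope.mp h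
  have h3 : Tendsto (slope Real.sinh 0) (nhdsWithin 0 (Set.Ioi 0)) (nhds 1) :=
    h2.mono_left (nhdsWithin_mono 0 (fun x hx => ne_of_gt hx))
  refine h3.congr ?_
  intro x
  simp [slope_def_field]

lemma LAinv : Tendsto (fun x : ℝ => x / Real.sinh x) (nhdsWithin 0 (Set.Ioi 0)) (nhds 1) := by
  have := LA.inv₀ one_ne_zero
  simp only [inv_one] at this
  refine this.congr ?_
  intro x
  rw [← one_div, one_div_div]

lemma Lcosh : Tendsto (fun x : ℝ => Real.cosh x) (nhdsWithin 0 (Set.Ioi 0)) (nhds 1) := by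
  have := tendsto_right_of_continuousAt (f := Real.cosh) (by fun_prop)
  simpa using this

-- L'Hopital step: (x cosh x - sinh x)/x^3 → 1/3
lemma LB : Tendsto (fun x : ℝ => (x * Real.cosh x - Real.sinh x) / x ^ 3)
    (nhdsWithin 0 (Set.Ioi 0)) (nhds (1/3)) := by
  apply HasDerivAt.lhopital_zero_nhdsGT (f' := fun x => x * Real.sinh x)
    (g' := fun x => 3 * x ^ 2)
  · filter_upwards with x
    have : HasDerivAt (fun x : ℝ => x * Real.cosh x - Real.sinh x)
        (1 * Real.cosh x + x * Real.sinh x - Real.cosh x) x :=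
      ((hasDerivAt_id x).mul (Real.hasDerivAt_cosh x)).sub (Real.hasDerivAt_sinh x)
    convert this using 1; ring
  · filter_upwards with x
    simpa using hasDerivAt_pow 3 x
  · filter_upwards [self_mem_nhdsWithin] with x hx
    have hx : (0:ℝ) < x := hx
    positivity
  · have := tendsto_right_of_continuousAt
      (f := fun x : ℝ => x * Real.cosh x - Real.sinh x) (by fun_prop)
    simpa using this
  · have := tendsto_right_of_continuousAt (f := fun x : ℝ => x ^ 3) (by fun_prop)
    simpa using this
  · have : Tendsto (fun x : ℝ => Real.sinh x / x / 3) (nhdsWithin 0 (Set.Ioi 0)) (nhds (1/3)) :=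
      LA.div_const 3
    refine this.congr' ?_
    filter_upwards [self_mem_nhdsWithin] with x hx
    have hx : (0:ℝ) < x := hx
    field_simp

-- h₁ limit
lemma Lh1 : Tendsto (fun x : ℝ => (x * coth x - 1) / x ^ 2)
    (nhdsWithin 0 (Set.Ioi 0)) (nhds (1/3)) := by
  have h : Tendsto (fun x : ℝ => ((x * Real.cosh x - Real.sinh x) / x ^ 3) * (x / Real.sinh x))
      (nhdsWithin 0 (Set.Ioi 0)) (nhds (1/3 * 1)) := LB.mul LAinv
  rw [mul_one] at h
  refine h.congr' ?_
  filter_upwards [self_mem_nhdsWithin] with x hx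
  have hx : (0:ℝ) < x := hx
  have hs : Real.sinh x ≠ 0 := ne_of_gt (by positivity)
  unfold coth
  field_simp

noncomputable def p0 (x : ℝ) : ℝ := x ^ 2 + x * Real.sinh x * Real.cosh x - 2 * Real.sinh x ^ 2
noncomputable def p1 (x : ℝ) : ℝ :=
  2 * x + x * Real.cosh x ^ 2 + x * Real.sinh x ^ 2 - 3 * Real.sinh x * Real.cosh x
noncomputable def p2 (x : ℝ) : ℝ :=
  2 - 2 * Real.cosh x ^ 2 - 2 * Real.sinh x ^ 2 + 4 * x * Real.sinh x * Real.cosh x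
noncomputable def p3 (x : ℝ) : ℝ :=
  -4 * Real.sinh x * Real.cosh x + 4 * x * Real.cosh x ^ 2 + 4 * x * Real.sinh x ^ 2
noncomputable def p4 (x : ℝ) : ℝ := 16 * x * Real.sinh x * Real.cosh x

lemma hp0 (x : ℝ) : HasDerivAt p0 (p1 x) x := by
  have h : HasDerivAt (fun x : ℝ => x ^ 2 + x * Real.sinh x * Real.cosh x - 2 * Real.sinh x ^ 2)
      ((2 * x ^ 1) + ((1 * Real.sinh x + x * Real.cosh x) * Real.cosh x
        + (x * Real.sinh x) * Real.sinh x)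
        - 2 * (2 * Real.sinh x ^ 1 * Real.cosh x)) x := by
    exact ((hasDerivAt_pow 2 x).add
      (((hasDerivAt_id x).mul (Real.hasDerivAt_sinh x)).mul (Real.hasDerivAt_cosh x))).sub
      (((Real.hasDerivAt_sinh x).pow 2).const_mul 2)
  convert h using 1
  · rfl
  unfold p1; ring

lemma hp1 (x : ℝ) : HasDerivAt p1 (p2 x) x := by
  have h : HasDerivAt (fun x : ℝ =>
      2 * x + x * Real.cosh x ^ 2 + x * Real.sinh x ^ 2 - 3 * Real.sinh x * Real.cosh x)
      ((2 * 1) + (1 * Real.cosh x ^ 2 + x * (2 * Real.cosh x ^ 1 * Real.sinh x))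
        + (1 * Real.sinh x ^ 2 + x * (2 * Real.sinh x ^ 1 * Real.cosh x))
        - ((3 * Real.cosh x) * Real.cosh x + (3 * Real.sinh x) * Real.sinh x)) x := by
    exact ((((hasDerivAt_id x).const_mul 2).add
      ((hasDerivAt_id x).mul ((Real.hasDerivAt_cosh x).pow 2))).add
      ((hasDerivAt_id x).mul ((Real.hasDerivAt_sinh x).pow 2))).sub
      (((Real.hasDerivAt_sinh x).const_mul 3).mul (Real.hasDerivAt_cosh x))
  convert h using 1
  · rfl
  unfold p2; ring

lemma hp2 (x : ℝ) : HasDerivAt p2 (p3 x) x := by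
  have h : HasDerivAt (fun x : ℝ =>
      2 - 2 * Real.cosh x ^ 2 - 2 * Real.sinh x ^ 2 + 4 * x * Real.sinh x * Real.cosh x)
      ((0 - 2 * (2 * Real.cosh x ^ 1 * Real.sinh x) - 2 * (2 * Real.sinh x ^ 1 * Real.cosh x))
        + ((4 * 1 * Real.sinh x + 4 * x * Real.cosh x) * Real.cosh x
          + (4 * x * Real.sinh x) * Real.sinh x)) x := by
    exact (((hasDerivAt_const x 2).sub (((Real.hasDerivAt_cosh x).pow 2).const_mul 2)).sub
      (((Real.hasDerivAt_sinh x).pow 2).const_mul 2)).add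
      ((((hasDerivAt_id x).const_mul 4).mul (Real.hasDerivAt_sinh x)).mul (Real.hasDerivAt_cosh x))
  convert h using 1
  · rfl
  unfold p3; ring

lemma hp3 (x : ℝ) : HasDerivAt p3 (p4 x) x := by
  have h : HasDerivAt (fun x : ℝ =>
      -4 * Real.sinh x * Real.cosh x + 4 * x * Real.cosh x ^ 2 + 4 * x * Real.sinh x ^ 2)
      (((-4 * Real.cosh x) * Real.cosh x + (-4 * Real.sinh x) * Real.sinh x)
        + (4 * 1 * Real.cosh x ^ 2 + 4 * x * (2 * Real.cosh x ^ 1 * Real.sinh x))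
        + (4 * 1 * Real.sinh x ^ 2 + 4 * x * (2 * Real.sinh x ^ 1 * Real.cosh x))) x := by
    exact ((((Real.hasDerivAt_sinh x).const_mul (-4)).mul (Real.hasDerivAt_cosh x)).add
      (((hasDerivAt_id x).const_mul 4).mul ((Real.hasDerivAt_cosh x).pow 2))).add
      (((hasDerivAt_id x).const_mul 4).mul ((Real.hasDerivAt_sinh x).pow 2))
  convert h using 1
  · rfl
  unfold p4; ring

lemma LC4 : Tendsto (fun x : ℝ => p4 x / (360 * x ^ 2))
    (nhdsWithin 0 (Set.Ioi 0)) (nhds (2/45)) := by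
  have h : Tendsto (fun x : ℝ => 2/45 * ((Real.sinh x / x) * Real.cosh x))
      (nhdsWithin 0 (Set.Ioi 0)) (nhds (2/45 * (1 * 1))) := (LA.mul Lcosh).const_mul (2/45)
  norm_num at h
  refine h.congr' ?_
  filter_upwards [self_mem_nhdsWithin] with x hx
  have hx : (0:ℝ) < x := hx
  unfold p4
  field_simp
  ring

lemma lhop_step {f f' : ℝ → ℝ} {c d : ℝ} {n : ℕ} (hn : 0 < n)
    (hf : ∀ x, HasDerivAt f (f' x) x) (hf0 : f 0 = 0)
    (hdiv : Tendsto (fun x => f' x / (c * n * x ^ (n - 1)))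
      (nhdsWithin 0 (Set.Ioi 0)) (nhds d)) (hc : c ≠ 0) :
    Tendsto (fun x => f x / (c * x ^ n)) (nhdsWithin 0 (Set.Ioi 0)) (nhds d) := by
  apply HasDerivAt.lhopital_zero_nhdsGT (f' := f') (g' := fun x => c * n * x ^ (n - 1))
  · filter_upwards with x; exact hf x
  · filter_upwards with x
    have := (hasDerivAt_pow n x).const_mul c
    rw [mul_assoc]
    exact this
  · filter_upwards [self_mem_nhdsWithin] with x hx
    have hx : (0:ℝ) < x := hx
    have : (0:ℝ) < x ^ (n - 1) := by positivity
    have hn' : (n:ℝ) ≠ 0 := Nat.cast_ne_zero.mpr hn.ne'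
    exact mul_ne_zero (mul_ne_zero hc hn') this.ne'
  · have := tendsto_right_of_continuousAt (f := f) (hf 0).differentiableAt.continuousAt
    rwa [hf0] at this
  · have := tendsto_right_of_continuousAt (f := fun x : ℝ => c * x ^ n) (by fun_prop)
    simpa [zero_pow hn.ne'] using this
  · exact hdiv

lemma LC3 : Tendsto (fun x : ℝ => p3 x / (120 * x ^ 3))
    (nhdsWithin 0 (Set.Ioi 0)) (nhds (2/45)) := by
  apply lhop_step (by norm_num) hp3 (by unfold p3; simp) ?_ (by norm_num)
  refine LC4.congr ?_
  intro x
  norm_num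

lemma LC2 : Tendsto (fun x : ℝ => p2 x / (30 * x ^ 4))
    (nhdsWithin 0 (Set.Ioi 0)) (nhds (2/45)) := by
  apply lhop_step (by norm_num) hp2 (by unfold p2; simp) ?_ (by norm_num)
  refine LC3.congr ?_
  intro x
  norm_num

lemma LC1 : Tendsto (fun x : ℝ => p1 x / (6 * x ^ 5))
    (nhdsWithin 0 (Set.Ioi 0)) (nhds (2/45)) := by
  apply lhop_step (by norm_num) hp1 (by unfold p1; simp) ?_ (by norm_num)
  refine LC2.congr ?_
  intro x
  norm_num

lemma LC0 : Tendsto (fun x : ℝ => p0 x / (1 * x ^ 6))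
    (nhdsWithin 0 (Set.Ioi 0)) (nhds (2/45)) := by
  apply lhop_step (by norm_num) hp0 (by unfold p0; simp) ?_ (by norm_num)
  refine LC1.congr ?_
  intro x
  norm_num

lemma Lh2 : Tendsto (fun x : ℝ => (x ^ 2 * csch x ^ 2 + x * coth x - 2) / x ^ 4)
    (nhdsWithin 0 (Set.Ioi 0)) (nhds (2/45)) := by
  have h : Tendsto (fun x : ℝ => (p0 x / (1 * x ^ 6)) * (x / Real.sinh x) ^ 2)
      (nhdsWithin 0 (Set.Ioi 0)) (nhds (2/45 * 1 ^ 2)) := LC0.mul (LAinv.pow 2)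
  norm_num at h
  refine h.congr' ?_
  filter_upwards [self_mem_nhdsWithin] with x hx
  have hx : (0:ℝ) < x := hx
  have hs : Real.sinh x ≠ 0 := ne_of_gt (by positivity)
  unfold p0 csch coth
  field_simp

lemma tendsto_mul_right (c : ℝ) (hc : 0 < c) :
    Tendsto (fun x : ℝ => c * x) (nhdsWithin 0 (Set.Ioi 0)) (nhdsWithin 0 (Set.Ioi 0)) := by
  rw [tendsto_nhdsWithin_iff]
  constructor
  · have : Tendsto (fun x : ℝ => c * x) (nhds 0) (nhds (c * 0)) := by
      exact (continuous_const.mul continuous_id).tendsto 0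
    simpa using this.mono_left nhdsWithin_le_nhds
  · filter_upwards [self_mem_nhdsWithin] with x hx
    exact mul_pos hc hx

theorem cv_plus_limit (β : ℝ) (hβ : β ∈ Set.Ioo (-1 : ℝ) 1) :
    Tendsto (fun kz : ℝ =>
        Real.sqrt (4 * kz ^ 2 * csch (2 * kz) ^ 2 + 2 * kz * coth (2 * kz) -
            (β * kz + kz) ^ 2 * csch (β * kz + kz) ^ 2 -
            (β * kz + kz) * coth (β * kz + kz)) /
          (2 * kz * coth (2 * kz) - (β * kz + kz) * coth (β * kz + kz)))
      (nhdsWithin 0 (Set.Ioi 0))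
      (nhds (Real.sqrt (2 * (β ^ 2 + 2 * β + 5) / (5 * (3 - 2 * β - β ^ 2))))) := by
  obtain ⟨hβ1, hβ2⟩ := hβ
  set c : ℝ := β + 1 with hc
  have hc0 : 0 < c := by linarith
  have hc2 : c < 2 := by linarith
  have hc4 : c ^ 2 < 4 := by nlinarith
  set h1 : ℝ → ℝ := fun x => (x * coth x - 1) / x ^ 2 with hh1
  set h2 : ℝ → ℝ := fun x => (x ^ 2 * csch x ^ 2 + x * coth x - 2) / x ^ 4 with hh2
  set A : ℝ → ℝ := fun kz => 16 * h2 (2 * kz) - c ^ 4 * h2 (c * kz) with hA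
  set B : ℝ → ℝ := fun kz => 4 * h1 (2 * kz) - c ^ 2 * h1 (c * kz) with hB
  have hAlim : Tendsto A (nhdsWithin 0 (Set.Ioi 0)) (nhds (16 * (2/45) - c ^ 4 * (2/45))) := by
    exact ((((Lh2.comp (tendsto_mul_right 2 two_pos))).const_mul 16).sub
      ((Lh2.comp (tendsto_mul_right c hc0)).const_mul (c ^ 4)))
  have hBlim : Tendsto B (nhdsWithin 0 (Set.Ioi 0)) (nhds (4 * (1/3) - c ^ 2 * (1/3))) := by
    exact ((((Lh1.comp (tendsto_mul_right 2 two_pos))).const_mul 4).sub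
      ((Lh1.comp (tendsto_mul_right c hc0)).const_mul (c ^ 2)))
  have hBpos : 0 < 4 * (1/3:ℝ) - c ^ 2 * (1/3) := by nlinarith
  have hmain : Tendsto (fun kz => Real.sqrt (A kz) / B kz) (nhdsWithin 0 (Set.Ioi 0))
      (nhds (Real.sqrt (16 * (2/45) - c ^ 4 * (2/45)) / (4 * (1/3) - c ^ 2 * (1/3)))) :=
    (hAlim.sqrt).div hBlim hBpos.ne'
  have hval : Real.sqrt (16 * (2/45) - c ^ 4 * (2/45)) / (4 * (1/3) - c ^ 2 * (1/3))
      = Real.sqrt (2 * (β ^ 2 + 2 * β + 5) / (5 * (3 - 2 * β - β ^ 2))) := by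
    have hN : (0:ℝ) ≤ 16 * (2/45) - c ^ 4 * (2/45) := by nlinarith
    rw [eq_comm, show (4 * (1/3:ℝ) - c ^ 2 * (1/3)) = Real.sqrt ((4 * (1/3) - c ^ 2 * (1/3)) ^ 2)
      from (Real.sqrt_sq hBpos.le).symm, ← Real.sqrt_div hN]
    congr 1
    rw [div_eq_div_iff (by nlinarith : (0:ℝ) < 5 * (3 - 2 * β - β ^ 2)).ne' (pow_ne_zero 2 hBpos.ne')]
    rw [hc]
    ring
  rw [← hval]
  refine hmain.congr' ?_
  filter_upwards [self_mem_nhdsWithin] with kz hkz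
  have hkz : (0:ℝ) < kz := hkz
  have hs2 : Real.sinh (2 * kz) ≠ 0 := ne_of_gt (by positivity)
  have hsc : Real.sinh (c * kz) ≠ 0 := ne_of_gt (by positivity)
  have hnum : A kz * kz ^ 4 = 4 * kz ^ 2 * csch (2 * kz) ^ 2 + 2 * kz * coth (2 * kz) -
      (β * kz + kz) ^ 2 * csch (β * kz + kz) ^ 2 - (β * kz + kz) * coth (β * kz + kz) := by
    rw [show β * kz + kz = c * kz by rw [hc]; ring]
    simp only [hA, hh2]
    unfold csch coth
    field_simp
    ring
  have hden : B kz * kz ^ 2 = 2 * kz * coth (2 * kz) - (β * kz + kz) * coth (β * kz + kz) := by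
    rw [show β * kz + kz = c * kz by rw [hc]; ring]
    simp only [hB, hh1]
    unfold coth
    field_simp
    ring
  rw [← hnum, ← hden, Real.sqrt_mul' _ (by positivity : (0:ℝ) ≤ kz ^ 4),
    show Real.sqrt (kz ^ 4) = kz ^ 2 by
      rw [show kz ^ 4 = (kz ^ 2) ^ 2 by ring, Real.sqrt_sq (by positivity)],
    mul_div_mul_right _ _ (by positivity : (kz:ℝ) ^ 2 ≠ 0)]
end

section
/- For the function g(x₀) = [3k_z·tanh(k_z) − 3k_z²·sech²(k_z) − 2k_z³·tanh(k_z)·sech²(k_z)], one has g(k_z) > 0 for all k_z > 0; i.e., 3 tanh(k) − 3k sech²(k) − 2k² tanh(k) sech²(k) > 0 for all k > 0. -/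
/-- Hyperbolic secant. -/
noncomputable def sech (x : ℝ) : ℝ := 1 / Real.cosh x

lemma sinh_lt_mul_cosh (k : ℝ) (hk : 0 < k) : Real.sinh k < k * Real.cosh k := by
  have h : StrictMonoOn (fun x : ℝ => x * Real.cosh x - Real.sinh x) (Set.Ici 0) := by
    apply strictMonoOn_of_deriv_pos (convex_Ici 0)
    · fun_prop
    · intro x hx
      rw [interior_Ici] at hx
      have hx' : 0 < x := hx
      have hd : HasDerivAt (fun x : ℝ => x * Real.cosh x - Real.sinh x)
          (1 * Real.cosh x + x * Real.sinh x - Real.cosh x) x :=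
        ((hasDerivAt_id x).mul (Real.hasDerivAt_cosh x)).sub (Real.hasDerivAt_sinh x)
      rw [hd.deriv]
      have hs : 0 < Real.sinh x := Real.sinh_pos_iff.mpr hx'
      nlinarith [mul_pos hx' hs]
  have := h (Set.self_mem_Ici) (Set.mem_Ici.mpr hk.le) hk
  simpa using this

lemma key_ineq (k : ℝ) (hk : 0 < k) :
    3 * k * Real.cosh k < (3 + k ^ 2) * Real.sinh k := by
  have h : StrictMonoOn (fun x : ℝ => (3 + x ^ 2) * Real.sinh x - 3 * x * Real.cosh x)
      (Set.Ici 0) := by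
    apply strictMonoOn_of_deriv_pos (convex_Ici 0)
    · fun_prop
    · intro x hx
      rw [interior_Ici] at hx
      have hx' : 0 < x := hx
      have h1 : HasDerivAt (fun y : ℝ => (3 + y ^ 2) * Real.sinh y)
          ((0 + 2 * x ^ 1) * Real.sinh x + (3 + x ^ 2) * Real.cosh x) x :=
        ((hasDerivAt_const x (3:ℝ)).add (hasDerivAt_pow 2 x)).mul (Real.hasDerivAt_sinh x)
      have h2 : HasDerivAt (fun y : ℝ => 3 * y * Real.cosh y)
          (3 * Real.cosh x + 3 * x * Real.sinh x) x := by
        have := ((hasDerivAt_id x).const_mul (3:ℝ)).mul (Real.hasDerivAt_cosh x)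
        simp only [mul_one] at this; exact this
      have hd := h1.sub h2
      rw [show deriv (fun x : ℝ => (3 + x ^ 2) * Real.sinh x - 3 * x * Real.cosh x) x = _ from hd.deriv]
      have hml := sinh_lt_mul_cosh x hx'
      nlinarith [mul_pos hx' (sub_pos.mpr hml)]
  have := h (Set.self_mem_Ici) (Set.mem_Ici.mpr hk.le) hk
  simpa using this

theorem third_central_moment_pos (k : ℝ) (hk : 0 < k) :
    3 * Real.tanh k - 3 * k * sech k ^ 2 - 2 * k ^ 2 * Real.tanh k * sech k ^ 2 > 0 := by
  have hc : 0 < Real.cosh k := Real.cosh_pos k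
  have hs : k < Real.sinh k := Real.self_lt_sinh_iff.mpr hk
  have hkey := key_ineq k hk
  have hN : 0 < 3 * Real.sinh k * Real.cosh k ^ 2 - 3 * k * Real.cosh k -
      2 * k ^ 2 * Real.sinh k := by
    have hid : Real.cosh k ^ 2 = 1 + Real.sinh k ^ 2 := by
      have := Real.cosh_sq_sub_sinh_sq k
      nlinarith
    rw [hid]
    have hsp : 0 < Real.sinh k := Real.sinh_pos_iff.mpr hk
    nlinarith [mul_pos hsp (mul_pos (sub_pos.mpr hs) (add_pos hk (hk.trans hs)))]
  have hE : 3 * Real.tanh k - 3 * k * sech k ^ 2 - 2 * k ^ 2 * Real.tanh k * sech k ^ 2 =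
      (3 * Real.sinh k * Real.cosh k ^ 2 - 3 * k * Real.cosh k - 2 * k ^ 2 * Real.sinh k) /
        Real.cosh k ^ 3 := by
    rw [Real.tanh_eq_sinh_div_cosh, sech]
    field_simp
  rw [hE]
  positivity
end
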